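/- Let n ≥ 4 be an even integer, and let γ_n : {0,…,n−1} → [0,∞) and γ_{2n} : {0,…,2n−1} → [0,∞) satisfy: γ_n(0) = γ_{2n}(0) = 0; γ_n(k) = γ_n(n−k) for 1 ≤ k ≤ n−1; γ_{2n}(k) = γ_{2n}(2n−k) for 1 ≤ k ≤ 2n−1; γ_{2n}(k) ≥ γ_n(k) for 1 ≤ k ≤ n/2 − 1; and γ_{2n}(n−k) − γ_{2n}(k) − 1 ≥ 0 for 0 ≤ k ≤ n/2 − 1. Assume further that for all real x ≥ 0 and all r_a, r_b ∈ [0,1]: (2γ_{2n}(n/2) − 2γ_n(n/2) − 1)·(r_a + r_b·x²) + γ_{2n}(n)·(1−x)² − (1 + x²) + 2x·√((1+r_a)(1+r_b)) ≥ 0. Then for all a, b ∈ [0,∞)ⁿ, writing λ = (a_0, b_0, a_1, b_1, …, a_{n−1}, b_{n−1}) ∈ [0,∞)^{2n}: ⟨a, Γ(n)a⟩ + ⟨b, Γ(n)b⟩ + (1/(2n))·(‖a‖₂ − ‖b‖₂)² ≤ 2⟨λ, Γ(2n)λ⟩. -/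

import Mathlib

open scoped BigOperators ComplexOrder

/-- The `m × m` DFT matrix with entries `e^{2πijk/m}`. -/
noncomputable def dftMatrix (m : ℕ) : Matrix (Fin m) (Fin m) ℂ :=
  Matrix.of fun j k => Complex.exp (2 * Real.pi * Complex.I * (j.val : ℂ) * (k.val : ℂ) / m)

/-- `Γ(m) = (1/m)·F_m·diag(γ(0),…,γ(m-1))·F_m⁻¹` for a weight `γ : ℕ → ℝ`. -/
noncomputable def GammaMat (m : ℕ) (γ : ℕ → ℝ) : Matrix (Fin m) (Fin m) ℂ :=
  (1 / m : ℂ) • (dftMatrix m * Matrix.diagonal (fun k : Fin m => (γ k.val : ℂ)) * (dftMatrix m)⁻¹)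

/-- `⟨u, Mu⟩ = ∑_j conj(u_j) (Mu)_j` for a real vector `u`. -/
noncomputable def quadForm (m : ℕ) (M : Matrix (Fin m) (Fin m) ℂ) (u : Fin m → ℝ) : ℂ :=
  ∑ j : Fin m, (starRingEnd ℂ) (u j : ℂ) * M.mulVec (fun i => (u i : ℂ)) j

/-- The interleaved vector `λ = (a_0, b_0, a_1, b_1, …, a_{n-1}, b_{n-1})`. -/
noncomputable def interleave (n : ℕ) (a b : Fin n → ℝ) : Fin (2 * n) → ℝ :=
  fun j =>
    if j.val % 2 = 0 then a ⟨j.val / 2, by have := j.isLt; omega⟩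
    else b ⟨j.val / 2, by have := j.isLt; omega⟩

set_option linter.unusedVariables false

namespace DCE

noncomputable def ζ (m : ℕ) : ℂ := Complex.exp (2 * Real.pi * Complex.I / m)

lemma zeta_prim (m : ℕ) (hm : m ≠ 0) : IsPrimitiveRoot (ζ m) m :=
  Complex.isPrimitiveRoot_exp m hm

lemma zeta_pow_self (m : ℕ) (hm : m ≠ 0) : ζ m ^ m = 1 := (zeta_prim m hm).pow_eq_one

lemma zeta_ne_zero (m : ℕ) : ζ m ≠ 0 := Complex.exp_ne_zero _

lemma dft_apply (m : ℕ) (j k : Fin m) : dftMatrix m j k = ζ m ^ (j.val * k.val) := by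
  rw [dftMatrix, Matrix.of_apply, ζ, ← Complex.exp_nat_mul]
  congr 1
  push_cast
  ring

lemma conj_zeta (m : ℕ) : (starRingEnd ℂ) (ζ m) = (ζ m)⁻¹ := by
  rw [ζ, ← Complex.exp_conj, ← Complex.exp_neg]
  congr 1
  simp only [map_div₀, map_mul, Complex.conj_I, Complex.conj_ofReal, map_ofNat, map_natCast, mul_neg]
  ring

lemma sum_zeta (m : ℕ) (hm : m ≠ 0) (p q : ℕ) (hp : p < m) (hq : q < m) :
    ∑ l : Fin m, ζ m ^ (p * l.val) * (ζ m)⁻¹ ^ (q * l.val) = if p = q then (m : ℂ) else 0 := by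
  have hζm := zeta_pow_self m hm
  have hζ0 := zeta_ne_zero m
  have hterm : ∀ l : Fin m, ζ m ^ (p * l.val) * (ζ m)⁻¹ ^ (q * l.val)
      = (ζ m ^ p * ((ζ m)⁻¹) ^ q) ^ (l.val) := by
    intro l
    rw [mul_pow, pow_mul, pow_mul]
  rw [Finset.sum_congr rfl (fun l _ => hterm l)]
  rw [Fin.sum_univ_eq_sum_range (fun l => (ζ m ^ p * ((ζ m)⁻¹) ^ q) ^ l) m]
  have hinvm : ((ζ m)⁻¹) ^ m = 1 := by rw [inv_pow, hζm, inv_one]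
  have hzm : (ζ m ^ p * ((ζ m)⁻¹) ^ q) ^ m = 1 := by
    rw [mul_pow, ← pow_mul, mul_comm p m, pow_mul, hζm, one_pow, one_mul,
      ← pow_mul, mul_comm q m, pow_mul, hinvm, one_pow]
  by_cases hpq : p = q
  · subst hpq
    rw [inv_pow, mul_inv_cancel₀ (pow_ne_zero _ hζ0)]
    simp
  · have hz1 : ζ m ^ p * ((ζ m)⁻¹) ^ q ≠ 1 := by
      intro h
      apply hpq
      rw [inv_pow] at h
      rw [mul_inv_eq_one₀ (pow_ne_zero _ hζ0)] at h
      exact (zeta_prim m hm).pow_inj hp hq h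
    rw [geom_sum_eq hz1, hzm]
    simp [hpq]

noncomputable def dftInv (m : ℕ) : Matrix (Fin m) (Fin m) ℂ :=
  Matrix.of fun j k => (m : ℂ)⁻¹ * (ζ m)⁻¹ ^ (j.val * k.val)

lemma dft_mul_dftInv (m : ℕ) (hm : m ≠ 0) : dftMatrix m * dftInv m = 1 := by
  ext j k
  rw [Matrix.mul_apply, Matrix.one_apply]
  have : ∀ l : Fin m, dftMatrix m j l * dftInv m l k
      = (m : ℂ)⁻¹ * (ζ m ^ (j.val * l.val) * (ζ m)⁻¹ ^ (k.val * l.val)) := by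
    intro l
    rw [dft_apply, dftInv, Matrix.of_apply, mul_comm l.val k.val]
    ring
  rw [Finset.sum_congr rfl (fun l _ => this l), ← Finset.mul_sum,
    sum_zeta m hm j.val k.val j.isLt k.isLt]
  have hmne : (m : ℂ) ≠ 0 := Nat.cast_ne_zero.mpr hm
  by_cases h : j = k
  · simp [h, inv_mul_cancel₀ hmne]
  · have : ¬ (j.val = k.val) := fun hh => h (Fin.ext hh)
    simp [h, this]

lemma dft_inv_eq (m : ℕ) (hm : m ≠ 0) : (dftMatrix m)⁻¹ = dftInv m :=
  Matrix.inv_eq_right_inv (dft_mul_dftInv m hm)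

noncomputable def Vhat (m : ℕ) (u : Fin m → ℝ) (k : ℕ) : ℂ :=
  ∑ j : Fin m, (u j : ℂ) * ζ m ^ (j.val * k)

lemma conj_Vhat (m : ℕ) (u : Fin m → ℝ) (k : ℕ) :
    (starRingEnd ℂ) (Vhat m u k) = ∑ j : Fin m, (u j : ℂ) * ((ζ m)⁻¹) ^ (j.val * k) := by
  rw [Vhat, map_sum]
  refine Finset.sum_congr rfl fun j _ => ?_
  rw [map_mul, map_pow, conj_zeta, Complex.conj_ofReal]

lemma quadForm_eq (m : ℕ) (hm : m ≠ 0) (γ : ℕ → ℝ) (u : Fin m → ℝ) :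
    quadForm m (GammaMat m γ) u
      = (((∑ k : Fin m, γ k.val * Complex.normSq (Vhat m u k.val)) / (m : ℝ)^2 : ℝ) : ℂ) := by
  have expand : quadForm m (GammaMat m γ) u = ∑ j : Fin m, ∑ p : Fin m, ∑ q : Fin m,
      (m:ℂ)⁻¹ * (m:ℂ)⁻¹ * (γ p.val : ℂ) * ((u j : ℂ) * ζ m ^ (j.val * p.val))
        * ((u q : ℂ) * (ζ m)⁻¹ ^ (q.val * p.val)) := by
    rw [quadForm, GammaMat, dft_inv_eq m hm]
    refine Finset.sum_congr rfl fun j _ => ?_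
    rw [Matrix.smul_mulVec, Pi.smul_apply, smul_eq_mul,
        ← Matrix.mulVec_mulVec, ← Matrix.mulVec_mulVec]
    simp only [Matrix.mulVec, dotProduct, Matrix.diagonal_apply, dft_apply, dftInv,
      Matrix.of_apply, Complex.conj_ofReal, ite_mul, zero_mul, Finset.sum_ite_eq,
      Finset.mem_univ, if_true]
    simp only [Finset.mul_sum, Finset.sum_mul]
    refine Finset.sum_congr rfl fun p _ => ?_
    refine Finset.sum_congr rfl fun q _ => ?_
    rw [mul_comm q.val p.val]
    ring
  rw [expand, Finset.sum_comm]
  push_cast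
  rw [Finset.sum_div]
  refine Finset.sum_congr rfl fun p _ => ?_
  rw [← Complex.mul_conj, conj_Vhat, Vhat, Finset.sum_mul_sum]
  simp only [Finset.mul_sum, Finset.sum_mul, Finset.sum_div]
  refine Finset.sum_congr rfl fun j _ => ?_
  refine Finset.sum_congr rfl fun q _ => ?_
  have hmne : ((m:ℝ) : ℂ) ≠ 0 := by
    simp only [Complex.ofReal_natCast, Ne, Nat.cast_eq_zero]; exact hm
  field_simp

lemma parseval (m : ℕ) (hm : m ≠ 0) (u : Fin m → ℝ) :
    ∑ k : Fin m, Complex.normSq (Vhat m u k.val) = m * ∑ j, (u j)^2 := by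
  have key : (((∑ k : Fin m, Complex.normSq (Vhat m u k.val) : ℝ)) : ℂ)
      = (((m : ℝ) * ∑ j, (u j)^2 : ℝ) : ℂ) := by
    push_cast
    calc ∑ k : Fin m, (Complex.normSq (Vhat m u k.val) : ℂ)
        = ∑ k : Fin m, Vhat m u k.val * (starRingEnd ℂ) (Vhat m u k.val) :=
          Finset.sum_congr rfl fun k _ => (Complex.mul_conj _).symm
      _ = ∑ k : Fin m, ∑ j : Fin m, ∑ q : Fin m,
            ((u j : ℂ) * (u q : ℂ)) * (ζ m ^ (j.val * k.val) * (ζ m)⁻¹ ^ (q.val * k.val)) := by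
          refine Finset.sum_congr rfl fun k _ => ?_
          rw [conj_Vhat, Vhat, Finset.sum_mul_sum]
          exact Finset.sum_congr rfl fun j _ => Finset.sum_congr rfl fun q _ => by ring
      _ = ∑ j : Fin m, ∑ q : Fin m,
            ((u j : ℂ) * (u q : ℂ)) * ∑ k : Fin m, ζ m ^ (j.val * k.val) * (ζ m)⁻¹ ^ (q.val * k.val) := by
          rw [Finset.sum_comm]
          refine Finset.sum_congr rfl fun j _ => ?_
          rw [Finset.sum_comm]
          exact Finset.sum_congr rfl fun q _ => (Finset.mul_sum _ _ _).symm
      _ = ∑ j : Fin m, ∑ q : Fin m, ((u j : ℂ) * (u q : ℂ)) * (if j = q then (m:ℂ) else 0) := by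
          refine Finset.sum_congr rfl fun j _ => Finset.sum_congr rfl fun q _ => ?_
          rw [sum_zeta m hm _ _ j.isLt q.isLt]
          congr 1
          simp [Fin.val_inj]
      _ = ∑ j : Fin m, (u j : ℂ) * (u j : ℂ) * (m:ℂ) := by
          refine Finset.sum_congr rfl fun j _ => ?_
          simp
      _ = (m:ℂ) * ∑ j, ((u j : ℂ))^2 := by
          rw [← Finset.sum_mul, mul_comm]
          congr 1
          exact Finset.sum_congr rfl fun j _ => (sq _).symm
  exact_mod_cast key

def eo (n : ℕ) : (Fin n ⊕ Fin n) ≃ Fin (2 * n) where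
  toFun x := Sum.elim (fun i : Fin n => (⟨2 * i.val, by have := i.isLt; omega⟩ : Fin (2 * n)))
    (fun i : Fin n => (⟨2 * i.val + 1, by have := i.isLt; omega⟩ : Fin (2 * n))) x
  invFun j := if j.val % 2 = 0 then Sum.inl ⟨j.val / 2, by have := j.isLt; omega⟩
    else Sum.inr ⟨j.val / 2, by have := j.isLt; omega⟩
  left_inv := by
    rintro (i | i) <;> dsimp only [Sum.elim_inl, Sum.elim_inr]
    · rw [if_pos (by omega : 2 * i.val % 2 = 0)]
      exact congrArg Sum.inl (Fin.ext (by omega : 2 * i.val / 2 = i.val))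
    · rw [if_neg (by omega : ¬ (2 * i.val + 1) % 2 = 0)]
      exact congrArg Sum.inr (Fin.ext (by omega : (2 * i.val + 1) / 2 = i.val))
  right_inv := by
    intro j
    dsimp only
    by_cases hj : j.val % 2 = 0
    · rw [if_pos hj]
      dsimp only [Sum.elim_inl]
      exact Fin.ext (by omega : 2 * (j.val / 2) = j.val)
    · rw [if_neg hj]
      dsimp only [Sum.elim_inr]
      exact Fin.ext (by omega : 2 * (j.val / 2) + 1 = j.val)

lemma zeta_sq (n : ℕ) (hn : n ≠ 0) : ζ (2 * n) ^ 2 = ζ n := by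
  rw [ζ, ζ, ← Complex.exp_nat_mul]
  congr 1
  have h1 : ((2 * n : ℕ) : ℂ) = 2 * (n : ℂ) := by push_cast; ring
  rw [h1]
  have hn' : (n : ℂ) ≠ 0 := Nat.cast_ne_zero.mpr hn
  field_simp
  ring

lemma zeta_pow_half (n : ℕ) (hn : n ≠ 0) : ζ (2 * n) ^ n = -1 := by
  rw [ζ, ← Complex.exp_nat_mul, ← Complex.exp_pi_mul_I]
  congr 1
  have h1 : ((2 * n : ℕ) : ℂ) = 2 * (n : ℂ) := by push_cast; ring
  rw [h1]
  have hn' : (n : ℂ) ≠ 0 := Nat.cast_ne_zero.mpr hn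
  field_simp

lemma zeta_pow_quarter (n : ℕ) (hn : n ≠ 0) : ζ (4 * n) ^ n = Complex.I := by
  rw [ζ, ← Complex.exp_nat_mul]
  have h1 : (n : ℂ) * (2 * Real.pi * Complex.I / ((4 * n : ℕ) : ℂ))
      = ((Real.pi / 2 : ℝ) : ℂ) * Complex.I := by
    have h2 : ((4 * n : ℕ) : ℂ) = 4 * (n : ℂ) := by push_cast; ring
    rw [h2]
    have hn' : (n : ℂ) ≠ 0 := Nat.cast_ne_zero.mpr hn
    push_cast
    field_simp
    ring
  rw [h1, Complex.exp_mul_I]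
  simp [← Complex.ofReal_cos, ← Complex.ofReal_sin, Real.cos_pi_div_two, Real.sin_pi_div_two]

lemma abs_zeta (m : ℕ) : ‖ζ m‖ = 1 := by
  have h1 : 2 * (Real.pi : ℂ) * Complex.I / m = ((2 * Real.pi / m : ℝ) : ℂ) * Complex.I := by
    push_cast
    ring
  rw [ζ, h1, Complex.norm_exp_ofReal_mul_I]

lemma vhat_shift (m : ℕ) (hm : m ≠ 0) (u : Fin m → ℝ) (k : ℕ) :
    Vhat m u (m + k) = Vhat m u k := by
  unfold Vhat
  refine Finset.sum_congr rfl fun j _ => ?_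
  congr 1
  rw [Nat.mul_add, pow_add, mul_comm j.val m, pow_mul, zeta_pow_self m hm, one_pow, one_mul]

lemma vhat_zero (m : ℕ) (u : Fin m → ℝ) : Vhat m u 0 = ((∑ j, u j : ℝ) : ℂ) := by
  unfold Vhat
  push_cast
  refine Finset.sum_congr rfl fun j _ => ?_
  rw [Nat.mul_zero, pow_zero, mul_one]

lemma vhat_half (n : ℕ) (m0 : ℕ) (hm0 : n = m0 + m0) (hn : n ≠ 0) (u : Fin n → ℝ) :
    Vhat n u m0 = ((∑ j, (-1 : ℝ) ^ (j : Fin n).val * u j : ℝ) : ℂ) := by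
  have hm0n : m0 ≠ 0 := by omega
  have hz : ζ n ^ m0 = -1 := by
    rw [show n = 2 * m0 by omega]
    exact zeta_pow_half m0 hm0n
  unfold Vhat
  push_cast
  refine Finset.sum_congr rfl fun j _ => ?_
  rw [mul_comm j.val m0, pow_mul, hz]
  ring

lemma vhat_interleave (n : ℕ) (hn : n ≠ 0) (a b : Fin n → ℝ) (k : ℕ) :
    Vhat (2 * n) (interleave n a b) k = Vhat n a k + ζ (2 * n) ^ k * Vhat n b k := by
  unfold Vhat
  rw [← Equiv.sum_comp (eo n) (fun j : Fin (2 * n) => ((interleave n a b j : ℝ) : ℂ) * ζ (2 * n) ^ (j.val * k)),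
    Fintype.sum_sum_type]
  have ha : ∀ i : Fin n, ((interleave n a b ((eo n) (Sum.inl i)) : ℝ) : ℂ)
      * ζ (2 * n) ^ ((((eo n) (Sum.inl i)) : Fin (2*n)).val * k)
      = (a i : ℂ) * ζ n ^ (i.val * k) := by
    intro i
    have h1 : ((eo n) (Sum.inl i) : Fin (2*n)).val = 2 * i.val := rfl
    have h2 : interleave n a b ((eo n) (Sum.inl i)) = a i := by
      unfold interleave
      rw [if_pos (by rw [h1]; omega)]
      congr 1
      refine Fin.ext ?_
      show (((eo n) (Sum.inl i) : Fin (2 * n)).val) / 2 = i.val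
      rw [h1]
      omega
    rw [h1, h2, show 2 * i.val * k = 2 * (i.val * k) by ring, pow_mul, zeta_sq n hn]
  have hb : ∀ i : Fin n, ((interleave n a b ((eo n) (Sum.inr i)) : ℝ) : ℂ)
      * ζ (2 * n) ^ ((((eo n) (Sum.inr i)) : Fin (2*n)).val * k)
      = ζ (2 * n) ^ k * ((b i : ℂ) * ζ n ^ (i.val * k)) := by
    intro i
    have h1 : ((eo n) (Sum.inr i) : Fin (2*n)).val = 2 * i.val + 1 := rfl
    have h2 : interleave n a b ((eo n) (Sum.inr i)) = b i := by
      unfold interleave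
      rw [if_neg (by rw [h1]; omega)]
      congr 1
      refine Fin.ext ?_
      show (((eo n) (Sum.inr i) : Fin (2 * n)).val) / 2 = i.val
      rw [h1]
      omega
    rw [h1, h2, show (2 * i.val + 1) * k = 2 * (i.val * k) + k by ring, pow_add, pow_mul,
      zeta_sq n hn]
    ring
  rw [Finset.sum_congr rfl fun i _ => ha i, Finset.sum_congr rfl fun i _ => hb i,
    ← Finset.mul_sum]

lemma sum_range_double {M : Type*} [AddCommMonoid M] (f : ℕ → M) (n : ℕ) :
    ∑ i ∈ Finset.range (2 * n), f i = ∑ i ∈ Finset.range n, f i + ∑ i ∈ Finset.range n, f (n + i) := by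
  rw [Finset.range_eq_Ico, ← Finset.sum_Ico_consecutive _ (Nat.zero_le n) (by omega : n ≤ 2 * n)]
  congr 1
  · rw [Finset.range_eq_Ico]
  rw [Finset.sum_Ico_eq_sum_range, show 2 * n - n = n from by omega, Finset.range_eq_Ico]

lemma generic_bound (g1 g2 gn : ℝ) (A B z : ℂ) (hz : ‖z‖ = 1)
    (hcase : (gn ≤ g1 ∧ gn + 1 ≤ g2) ∨ (gn ≤ g2 ∧ gn + 1 ≤ g1)) :
    (1/2) * (Complex.normSq A + Complex.normSq B)
        - Real.sqrt (Complex.normSq A) * Real.sqrt (Complex.normSq B)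
      ≤ (1/2) * (g1 * Complex.normSq (A + z * B) + g2 * Complex.normSq (A - z * B))
        - gn * (Complex.normSq A + Complex.normSq B) := by
  have hsqA : Real.sqrt (Complex.normSq A) = ‖A‖ := by rw [Complex.norm_def]
  have hsqB : Real.sqrt (Complex.normSq B) = ‖B‖ := by rw [Complex.norm_def]
  rw [hsqA, hsqB]
  set x := ‖A‖ with hx
  set y := ‖B‖ with hy
  have hnA : Complex.normSq A = x ^ 2 := (Complex.sq_norm A).symm
  have hnB : Complex.normSq B = y ^ 2 := (Complex.sq_norm B).symm
  have hnzB : Complex.normSq (z * B) = y ^ 2 := by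
    rw [Complex.normSq_mul, ← Complex.sq_norm z, hz]
    simpa using hnB
  have hpar : Complex.normSq (A + z * B) + Complex.normSq (A - z * B)
      = 2 * (x ^ 2 + y ^ 2) := by
    rw [Complex.normSq_add, Complex.normSq_sub, hnA, hnzB]
    ring
  have habs1 : |x - y| ≤ ‖A - z * B‖ := by
    have h := abs_norm_sub_norm_le A (z * B)
    rwa [show ‖z * B‖ = y by rw [norm_mul, hz, one_mul]] at h
  have habs2 : |x - y| ≤ ‖A + z * B‖ := by
    have h := abs_norm_sub_norm_le A (-(z * B))
    rw [norm_neg, sub_neg_eq_add] at h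
    rwa [show ‖z * B‖ = y by rw [norm_mul, hz, one_mul]] at h
  have hb1 : (x - y) ^ 2 ≤ Complex.normSq (A - z * B) := by
    rw [← Complex.sq_norm]
    rcases abs_le.mp habs1 with ⟨h1, h2⟩
    exact sq_le_sq' h1 h2
  have hb2 : (x - y) ^ 2 ≤ Complex.normSq (A + z * B) := by
    rw [← Complex.sq_norm]
    rcases abs_le.mp habs2 with ⟨h1, h2⟩
    exact sq_le_sq' h1 h2
  have h1nn : 0 ≤ Complex.normSq (A + z * B) := Complex.normSq_nonneg _
  have h2nn : 0 ≤ Complex.normSq (A - z * B) := Complex.normSq_nonneg _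
  rw [hnA, hnB]
  have hgn : gn * (Complex.normSq (A + z * B) + Complex.normSq (A - z * B))
      = gn * (2 * (x ^ 2 + y ^ 2)) := by rw [hpar]
  rw [sub_sq] at hb1 hb2
  rcases hcase with ⟨hc1, hc2⟩ | ⟨hc1, hc2⟩
  · have t1 : 0 ≤ (g1 - gn) * Complex.normSq (A + z * B) :=
      mul_nonneg (by linarith) h1nn
    have t2 : 0 ≤ (g2 - gn - 1) * Complex.normSq (A - z * B) :=
      mul_nonneg (by linarith) h2nn
    nlinarith [t1, t2, hgn, hb1]
  · have t1 : 0 ≤ (g1 - gn - 1) * Complex.normSq (A + z * B) :=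
      mul_nonneg (by linarith) h1nn
    have t2 : 0 ≤ (g2 - gn) * Complex.normSq (A - z * B) :=
      mul_nonneg (by linarith) h2nn
    nlinarith [t1, t2, hgn, hb2]

lemma star_bound (G c : ℝ)
    (H : ∀ x : ℝ, 0 ≤ x → ∀ ra rb : ℝ, 0 ≤ ra → ra ≤ 1 → 0 ≤ rb → rb ≤ 1 →
      0 ≤ (2 * c - 1) * (ra + rb * x ^ 2) + G * (1 - x) ^ 2 - (1 + x ^ 2)
        + 2 * x * Real.sqrt ((1 + ra) * (1 + rb)))
    (A0 B0 A B : ℝ) (hA0 : 0 ≤ A0) (hB0 : 0 ≤ B0) (hA : |A| ≤ A0) (hB : |B| ≤ B0) :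
    (1/2) * (A0^2 + A^2 + B0^2 + B^2) - Real.sqrt ((A0^2 + A^2) * (B0^2 + B^2))
      ≤ G/2 * (A0 - B0)^2 + c * (A^2 + B^2) := by
  have hA2 : A^2 ≤ A0^2 := by
    rw [← sq_abs A]
    exact pow_le_pow_left₀ (abs_nonneg A) hA 2
  have hB2 : B^2 ≤ B0^2 := by
    rw [← sq_abs B]
    exact pow_le_pow_left₀ (abs_nonneg B) hB 2
  have key : 0 ≤ (2 * c - 1) * (A^2 + B^2) + G * (A0 - B0)^2 - (A0^2 + B0^2)
      + 2 * Real.sqrt ((A0^2 + A^2) * (B0^2 + B^2)) := by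
    by_cases hA0z : A0 = 0
    · have hAz : A = 0 := by
        have := hA.trans_eq hA0z
        have := abs_nonneg A
        have : |A| = 0 := le_antisymm ‹|A| ≤ 0› ‹0 ≤ |A|›
        exact abs_eq_zero.mp this
      subst hAz
      rw [hA0z]
      by_cases hB0z : B0 = 0
      · have hBz : B = 0 := by
          have h1 : |B| = 0 := le_antisymm (hB.trans_eq hB0z) (abs_nonneg B)
          exact abs_eq_zero.mp h1
        subst hBz
        rw [hB0z]
        norm_num
      · have hB0p : 0 < B0 := lt_of_le_of_ne hB0 (Ne.symm hB0z)
        have hB0sq : (0:ℝ) < B0^2 := by positivity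
        have hra1 : B^2 / B0^2 ≤ 1 := by
          rw [div_le_one hB0sq]; exact hB2
        have hH := H 0 le_rfl (B^2 / B0^2) 0 (by positivity) hra1 le_rfl zero_le_one
        norm_num at hH
        have e1 : ((2 * c - 1) * (B^2 / B0^2) + G - 1) * B0^2
            = (2 * c - 1) * B^2 + (G - 1) * B0^2 := by
          field_simp
          ring
        have h6 : 0 ≤ ((2 * c - 1) * (B^2 / B0^2) + G - 1) * B0^2 :=
          mul_nonneg (by linarith) (by positivity)
        rw [e1] at h6
        have hsz : Real.sqrt (((0:ℝ)^2 + 0^2) * (B0^2 + B^2)) = 0 := by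
          simp
        rw [hsz]
        nlinarith
    · have hA0p : 0 < A0 := lt_of_le_of_ne hA0 (Ne.symm hA0z)
      have hA0sq : (0:ℝ) < A0^2 := by positivity
      set x := B0 / A0 with hxdef
      have hx : 0 ≤ x := div_nonneg hB0 hA0
      set ra := A^2 / A0^2 with hradef
      have hra0 : 0 ≤ ra := by positivity
      have hra1 : ra ≤ 1 := by rw [hradef, div_le_one hA0sq]; exact hA2
      by_cases hB0z : B0 = 0
      · have hBz : B = 0 := by
          have h1 : |B| = 0 := le_antisymm (hB.trans_eq hB0z) (abs_nonneg B)
          exact abs_eq_zero.mp h1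
        subst hBz
        rw [hB0z]
        have hH := H 0 le_rfl ra 0 hra0 hra1 le_rfl zero_le_one
        norm_num at hH
        have e1 : ((2 * c - 1) * ra + G - 1) * A0^2
            = (2 * c - 1) * A^2 + (G - 1) * A0^2 := by
          rw [hradef]
          field_simp
          ring
        have h6 : 0 ≤ ((2 * c - 1) * ra + G - 1) * A0^2 :=
          mul_nonneg (by linarith) (by positivity)
        rw [e1] at h6
        have hsz : Real.sqrt ((A0^2 + A^2) * ((0:ℝ)^2 + 0^2)) = 0 := by
          simp
        rw [hsz]
        nlinarith
      · have hB0p : 0 < B0 := lt_of_le_of_ne hB0 (Ne.symm hB0z)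
        have hB0sq : (0:ℝ) < B0^2 := by positivity
        set rb := B^2 / B0^2 with hrbdef
        have hrb0 : 0 ≤ rb := by positivity
        have hrb1 : rb ≤ 1 := by rw [hrbdef, div_le_one hB0sq]; exact hB2
        have hH := H x hx ra rb hra0 hra1 hrb0 hrb1
        have hNnn : (0:ℝ) ≤ (A0^2 + A^2) * (B0^2 + B^2) := by positivity
        have e4 : 2 * x * Real.sqrt ((1 + ra) * (1 + rb))
            = 2 * (Real.sqrt ((A0^2 + A^2) * (B0^2 + B^2)) / A0^2) := by
          rw [mul_assoc]
          congr 1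
          have h1 : (1 + ra) * (1 + rb) = ((A0^2 + A^2) * (B0^2 + B^2)) / (A0 * B0)^2 := by
            rw [hradef, hrbdef]
            field_simp
          rw [h1, Real.sqrt_div hNnn, Real.sqrt_sq (by positivity : (0:ℝ) ≤ A0 * B0), hxdef]
          have hA0ne : A0 ≠ 0 := ne_of_gt hA0p
          have hB0ne : B0 ≠ 0 := ne_of_gt hB0p
          field_simp
        rw [e4] at hH
        have e7 : ((2 * c - 1) * (ra + rb * x ^ 2) + G * (1 - x) ^ 2 - (1 + x ^ 2)
              + 2 * (Real.sqrt ((A0^2 + A^2) * (B0^2 + B^2)) / A0^2)) * A0^2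
            = (2 * c - 1) * (A^2 + B^2) + G * (A0 - B0)^2 - (A0^2 + B0^2)
              + 2 * Real.sqrt ((A0^2 + A^2) * (B0^2 + B^2)) := by
          rw [hradef, hrbdef, hxdef]
          field_simp
        have h6 : 0 ≤ ((2 * c - 1) * (ra + rb * x ^ 2) + G * (1 - x) ^ 2 - (1 + x ^ 2)
              + 2 * (Real.sqrt ((A0^2 + A^2) * (B0^2 + B^2)) / A0^2)) * A0^2 :=
          mul_nonneg hH (by positivity)
        rw [e7] at h6
        exact h6
  linarith


end DCE

open DCE

/-- even case of the Dirichlet form comparison, Proposition 4.1: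
under the compatibility conditions on the weight pair `(γ_n, γ_{2n})` and the
scalar inequality, the `n`-level Dirichlet forms are dominated by the `2n`-level one.
The conclusion is an inequality in the complex order. -/
theorem dirichlet_compare_even (n : ℕ) (hn : 4 ≤ n) (hne : Even n)
    (γn γ2n : ℕ → ℝ)
    (hγn0 : ∀ k, k < n → 0 ≤ γn k) (hγ2n0 : ∀ k, k < 2 * n → 0 ≤ γ2n k)
    (h00 : γn 0 = 0) (h00' : γ2n 0 = 0)
    (hsymn : ∀ k, 1 ≤ k → k ≤ n - 1 → γn k = γn (n - k))
    (hsym2n : ∀ k, 1 ≤ k → k ≤ 2 * n - 1 → γ2n k = γ2n (2 * n - k))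
    (hge : ∀ k, 1 ≤ k → k ≤ n / 2 - 1 → γn k ≤ γ2n k)
    (hgap : ∀ k, k ≤ n / 2 - 1 → 0 ≤ γ2n (n - k) - γ2n k - 1)
    (hscal : ∀ x : ℝ, 0 ≤ x → ∀ ra rb : ℝ, 0 ≤ ra → ra ≤ 1 → 0 ≤ rb → rb ≤ 1 →
      0 ≤ (2 * γ2n (n / 2) - 2 * γn (n / 2) - 1) * (ra + rb * x ^ 2)
          + γ2n n * (1 - x) ^ 2 - (1 + x ^ 2)
          + 2 * x * Real.sqrt ((1 + ra) * (1 + rb)))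
    (a b : Fin n → ℝ) (ha : ∀ i, 0 ≤ a i) (hb : ∀ i, 0 ≤ b i) :
    quadForm n (GammaMat n γn) a + quadForm n (GammaMat n γn) b
      + (((1 / (2 * n) : ℝ) *
          (Real.sqrt (∑ i, a i ^ 2) - Real.sqrt (∑ i, b i ^ 2)) ^ 2 : ℝ) : ℂ)
    ≤ 2 * quadForm (2 * n) (GammaMat (2 * n) γ2n) (interleave n a b) := by
  obtain ⟨m0, hm0⟩ := hne
  have hm02 : 2 ≤ m0 := by omega
  have hn0 : n ≠ 0 := by omega
  have h2n0 : 2 * n ≠ 0 := by omega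
  have hh : n / 2 = m0 := by omega
  rw [hh] at hscal
  set lam := interleave n a b with hlam
  rw [quadForm_eq n hn0 γn a, quadForm_eq n hn0 γn b, quadForm_eq (2 * n) h2n0 γ2n lam]
  rw [← Complex.ofReal_add, ← Complex.ofReal_add,
    show (2 : ℂ) = ((2 : ℝ) : ℂ) from by norm_num, ← Complex.ofReal_mul,
    Complex.real_le_real]
  -- abbreviations
  set za := ∑ i, a i ^ 2 with hza
  set zb := ∑ i, b i ^ 2 with hzb
  set P : ℕ → ℝ := fun k => Complex.normSq (Vhat n a k) with hP
  set Q : ℕ → ℝ := fun k => Complex.normSq (Vhat n b k) with hQ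
  set SA := ∑ k ∈ Finset.range n, P k with hSA
  set SB := ∑ k ∈ Finset.range n, Q k with hSB
  have hzann : 0 ≤ za := Finset.sum_nonneg fun i _ => sq_nonneg _
  have hzbnn : 0 ≤ zb := Finset.sum_nonneg fun i _ => sq_nonneg _
  have hPa : SA = (n : ℝ) * za := by
    rw [hSA, ← Fin.sum_univ_eq_sum_range (fun k => Complex.normSq (Vhat n a k)) n]
    exact parseval n hn0 a
  have hPb : SB = (n : ℝ) * zb := by
    rw [hSB, ← Fin.sum_univ_eq_sum_range (fun k => Complex.normSq (Vhat n b k)) n]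
    exact parseval n hn0 b
  have hSAnn : 0 ≤ SA := by rw [hPa]; positivity
  have hSBnn : 0 ≤ SB := by rw [hPb]; positivity
  have hsqa : Real.sqrt SA = Real.sqrt n * Real.sqrt za := by
    rw [hPa, Real.sqrt_mul (Nat.cast_nonneg n)]
  have hsqb : Real.sqrt SB = Real.sqrt n * Real.sqrt zb := by
    rw [hPb, Real.sqrt_mul (Nat.cast_nonneg n)]
  have hD : (n : ℝ) * (Real.sqrt za - Real.sqrt zb) ^ 2
      = SA + SB - 2 * (Real.sqrt SA * Real.sqrt SB) := by
    have e2 : Real.sqrt SA * Real.sqrt SB = (n : ℝ) * (Real.sqrt za * Real.sqrt zb) := by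
      rw [hsqa, hsqb, show Real.sqrt (n:ℝ) * Real.sqrt za * (Real.sqrt (n:ℝ) * Real.sqrt zb)
        = Real.sqrt (n:ℝ) * Real.sqrt (n:ℝ) * (Real.sqrt za * Real.sqrt zb) from by ring,
        Real.mul_self_sqrt (Nat.cast_nonneg n)]
    rw [e2, hPa, hPb, sub_sq, Real.sq_sqrt hzann, Real.sq_sqrt hzbnn]
    ring
  -- interleave Fourier split
  have hu : ∀ k : ℕ, Vhat (2 * n) lam k = Vhat n a k + ζ (2 * n) ^ k * Vhat n b k :=
    vhat_interleave n hn0 a b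
  have hv : ∀ k : ℕ, Vhat (2 * n) lam (n + k) = Vhat n a k - ζ (2 * n) ^ k * Vhat n b k := by
    intro k
    rw [hu (n + k), vhat_shift n hn0 a k, vhat_shift n hn0 b k, pow_add, zeta_pow_half n hn0]
    ring
  have hS2 : ∑ k : Fin (2 * n), γ2n k.val * Complex.normSq (Vhat (2 * n) lam k.val)
      = ∑ k ∈ Finset.range n,
          (γ2n k * Complex.normSq (Vhat n a k + ζ (2 * n) ^ k * Vhat n b k)
            + γ2n (n + k) * Complex.normSq (Vhat n a k - ζ (2 * n) ^ k * Vhat n b k)) := by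
    rw [Fin.sum_univ_eq_sum_range (fun k => γ2n k * Complex.normSq (Vhat (2 * n) lam k)) (2 * n),
      sum_range_double, ← Finset.sum_add_distrib]
    refine Finset.sum_congr rfl fun k _ => ?_
    rw [hu k, hv k]
  set T : ℕ → ℝ := fun k => (1/2) * (γ2n k * Complex.normSq (Vhat n a k + ζ (2 * n) ^ k * Vhat n b k)
      + γ2n (n + k) * Complex.normSq (Vhat n a k - ζ (2 * n) ^ k * Vhat n b k))
      - γn k * (P k + Q k) with hT
  set f : ℕ → ℝ := fun k => if k = 0 then Real.sqrt (P 0 + P m0) else if k = m0 then 0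
      else Real.sqrt (P k) with hf
  set g : ℕ → ℝ := fun k => if k = 0 then Real.sqrt (Q 0 + Q m0) else if k = m0 then 0
      else Real.sqrt (Q k) with hg
  have h0mem : 0 ∈ Finset.range n := by
    rw [Finset.mem_range]; omega
  have hm0mem : m0 ∈ (Finset.range n).erase 0 := by
    rw [Finset.mem_erase, Finset.mem_range]; omega
  set s : Finset ℕ := ((Finset.range n).erase 0).erase m0 with hs
  have hsplit : ∀ F : ℕ → ℝ, ∑ k ∈ Finset.range n, F k = F 0 + F m0 + ∑ k ∈ s, F k := by
    intro F
    rw [← Finset.add_sum_erase _ F h0mem, ← Finset.add_sum_erase _ F hm0mem]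
    ring
  have hmem : ∀ k ∈ s, k ≠ 0 ∧ k ≠ m0 ∧ k < n := by
    intro k hk
    rw [hs, Finset.mem_erase, Finset.mem_erase, Finset.mem_range] at hk
    tauto
  -- special values
  set A0 := ∑ j, a j with hA0
  set B0 := ∑ j, b j with hB0
  set As := ∑ j : Fin n, (-1 : ℝ) ^ (j : Fin n).val * a j with hAs
  set Bs := ∑ j : Fin n, (-1 : ℝ) ^ (j : Fin n).val * b j with hBs
  have hVa0 : Vhat n a 0 = ((A0 : ℝ) : ℂ) := vhat_zero n a
  have hVb0 : Vhat n b 0 = ((B0 : ℝ) : ℂ) := vhat_zero n b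
  have hVam : Vhat n a m0 = ((As : ℝ) : ℂ) := vhat_half n m0 hm0 hn0 a
  have hVbm : Vhat n b m0 = ((Bs : ℝ) : ℂ) := vhat_half n m0 hm0 hn0 b
  have hP0 : P 0 = A0 ^ 2 := by
    show Complex.normSq (Vhat n a 0) = A0 ^ 2
    rw [hVa0, Complex.normSq_ofReal]; ring
  have hQ0 : Q 0 = B0 ^ 2 := by
    show Complex.normSq (Vhat n b 0) = B0 ^ 2
    rw [hVb0, Complex.normSq_ofReal]; ring
  have hPm : P m0 = As ^ 2 := by
    show Complex.normSq (Vhat n a m0) = As ^ 2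
    rw [hVam, Complex.normSq_ofReal]; ring
  have hQm : Q m0 = Bs ^ 2 := by
    show Complex.normSq (Vhat n b m0) = Bs ^ 2
    rw [hVbm, Complex.normSq_ofReal]; ring
  have hwq : ζ (2 * n) ^ m0 = Complex.I := by
    rw [show 2 * n = 4 * m0 from by omega]
    exact zeta_pow_quarter m0 (by omega)
  have hg2sym : γ2n (n + m0) = γ2n m0 := by
    have h1 := hsym2n (n + m0) (by omega) (by omega)
    rwa [show 2 * n - (n + m0) = m0 from by omega] at h1
  have hT0 : T 0 = γ2n n / 2 * (A0 - B0) ^ 2 := by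
    show (1/2) * (γ2n 0 * Complex.normSq (Vhat n a 0 + ζ (2 * n) ^ 0 * Vhat n b 0)
      + γ2n (n + 0) * Complex.normSq (Vhat n a 0 - ζ (2 * n) ^ 0 * Vhat n b 0))
      - γn 0 * (P 0 + Q 0) = _
    rw [pow_zero, one_mul, hVa0, hVb0, h00, h00', ← Complex.ofReal_add, ← Complex.ofReal_sub,
      Complex.normSq_ofReal, Complex.normSq_ofReal, Nat.add_zero]
    ring
  have hTm : T m0 = (γ2n m0 - γn m0) * (As ^ 2 + Bs ^ 2) := by
    show (1/2) * (γ2n m0 * Complex.normSq (Vhat n a m0 + ζ (2 * n) ^ m0 * Vhat n b m0)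
      + γ2n (n + m0) * Complex.normSq (Vhat n a m0 - ζ (2 * n) ^ m0 * Vhat n b m0))
      - γn m0 * (P m0 + Q m0) = _
    rw [hg2sym, hVam, hVbm, hwq]
    have h1 : Complex.normSq (((As : ℝ) : ℂ) + Complex.I * ((Bs : ℝ) : ℂ)) = As ^ 2 + Bs ^ 2 := by
      rw [show ((As : ℝ) : ℂ) + Complex.I * ((Bs : ℝ) : ℂ)
        = ((As : ℝ) : ℂ) + ((Bs : ℝ) : ℂ) * Complex.I from by ring, Complex.normSq_add_mul_I]
    have h2 : Complex.normSq (((As : ℝ) : ℂ) - Complex.I * ((Bs : ℝ) : ℂ)) = As ^ 2 + Bs ^ 2 := by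
      rw [show ((As : ℝ) : ℂ) - Complex.I * ((Bs : ℝ) : ℂ)
        = ((As : ℝ) : ℂ) + (((-Bs : ℝ)) : ℂ) * Complex.I from by push_cast; ring,
        Complex.normSq_add_mul_I]
      ring
    rw [h1, h2, hPm, hQm]
    ring
  -- the merged bound at 0 and m0
  have hA0nn : 0 ≤ A0 := Finset.sum_nonneg fun i _ => ha i
  have hB0nn : 0 ≤ B0 := Finset.sum_nonneg fun i _ => hb i
  have hAsb : |As| ≤ A0 := by
    rw [hAs, hA0]
    refine (Finset.abs_sum_le_sum_abs _ _).trans ?_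
    refine le_of_eq (Finset.sum_congr rfl fun j _ => ?_)
    rw [abs_mul, abs_pow, abs_neg, abs_one, one_pow, one_mul, abs_of_nonneg (ha j)]
  have hBsb : |Bs| ≤ B0 := by
    rw [hBs, hB0]
    refine (Finset.abs_sum_le_sum_abs _ _).trans ?_
    refine le_of_eq (Finset.sum_congr rfl fun j _ => ?_)
    rw [abs_mul, abs_pow, abs_neg, abs_one, one_pow, one_mul, abs_of_nonneg (hb j)]
  have hstar : ((1/2) * (P 0 + Q 0) - f 0 * g 0) + ((1/2) * (P m0 + Q m0) - f m0 * g m0)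
      ≤ T 0 + T m0 := by
    have hf0 : f 0 = Real.sqrt (P 0 + P m0) := by
      show (if 0 = 0 then Real.sqrt (P 0 + P m0) else _) = _
      rw [if_pos rfl]
    have hg0 : g 0 = Real.sqrt (Q 0 + Q m0) := by
      show (if 0 = 0 then Real.sqrt (Q 0 + Q m0) else _) = _
      rw [if_pos rfl]
    have hfm : f m0 = 0 := by
      show (if m0 = 0 then _ else if m0 = m0 then (0:ℝ) else _) = _
      rw [if_neg (by omega), if_pos rfl]
    have hgm : g m0 = 0 := by
      show (if m0 = 0 then _ else if m0 = m0 then (0:ℝ) else _) = _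
      rw [if_neg (by omega), if_pos rfl]
    have hsb := star_bound (γ2n n) (γ2n m0 - γn m0)
      (fun x hx ra rb h1 h2 h3 h4 => by
        have h5 := hscal x hx ra rb h1 h2 h3 h4
        rw [show 2 * (γ2n m0 - γn m0) - 1 = 2 * γ2n m0 - 2 * γn m0 - 1 from by ring]
        exact h5)
      A0 B0 As Bs hA0nn hB0nn hAsb hBsb
    have hsqm : Real.sqrt (P 0 + P m0) * Real.sqrt (Q 0 + Q m0)
        = Real.sqrt ((A0 ^ 2 + As ^ 2) * (B0 ^ 2 + Bs ^ 2)) := by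
      rw [hP0, hPm, hQ0, hQm, ← Real.sqrt_mul (by positivity)]
    rw [hf0, hg0, hfm, hgm, hsqm, hT0, hTm, hP0, hQ0, hPm, hQm]
    linarith [hsb]
  -- generic bound
  have hgen : ∀ k ∈ s, (1/2) * (P k + Q k) - f k * g k ≤ T k := by
    intro k hk
    obtain ⟨hk0, hkm, hkn⟩ := hmem k hk
    have hfk : f k = Real.sqrt (P k) := by
      show (if k = 0 then _ else if k = m0 then _ else Real.sqrt (P k)) = _
      rw [if_neg hk0, if_neg hkm]
    have hgk : g k = Real.sqrt (Q k) := by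
      show (if k = 0 then _ else if k = m0 then _ else Real.sqrt (Q k)) = _
      rw [if_neg hk0, if_neg hkm]
    have habs : ‖ζ (2 * n) ^ k‖ = 1 := by
      rw [norm_pow, abs_zeta, one_pow]
    have hyn : γ2n (n + k) = γ2n (n - k) := by
      have h1 := hsym2n (n + k) (by omega) (by omega)
      rwa [show 2 * n - (n + k) = n - k from by omega] at h1
    have hcase : (γn k ≤ γ2n k ∧ γn k + 1 ≤ γ2n (n + k))
        ∨ (γn k ≤ γ2n (n + k) ∧ γn k + 1 ≤ γ2n k) := by
      rcases lt_or_gt_of_ne hkm with hlt | hgt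
      · left
        have h3 := hge k (by omega) (by omega)
        have h2 := hgap k (by omega)
        rw [hyn]
        constructor
        · exact h3
        · linarith
      · right
        have hk1 : 1 ≤ n - k := by omega
        have hk2 : n - k ≤ n / 2 - 1 := by omega
        have h1 := hsymn (n - k) (by omega) (by omega)
        rw [show n - (n - k) = k from by omega] at h1
        have h2 := hge (n - k) (by omega) hk2
        have h3 := hgap (n - k) hk2
        rw [show n - (n - k) = k from by omega] at h3
        rw [hyn]
        constructor
        · linarith
        · linarith
    have hgb := generic_bound (γ2n k) (γ2n (n + k)) (γn k) (Vhat n a k) (Vhat n b k)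
      (ζ (2 * n) ^ k) habs hcase
    rw [hfk, hgk]
    exact hgb
  -- Cauchy–Schwarz
  have hPnn : ∀ k, 0 ≤ P k := fun k => Complex.normSq_nonneg _
  have hQnn : ∀ k, 0 ≤ Q k := fun k => Complex.normSq_nonneg _
  have hc : ∑ k ∈ Finset.range n, f k * g k ≤ Real.sqrt SA * Real.sqrt SB := by
    have h1 := Real.sum_mul_le_sqrt_mul_sqrt (Finset.range n) f g
    have hf2 : ∑ k ∈ Finset.range n, f k ^ 2 = SA := by
      rw [hsplit (fun k => f k ^ 2), hSA, hsplit P]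
      have e0 : f 0 ^ 2 = P 0 + P m0 := by
        rw [show f 0 = Real.sqrt (P 0 + P m0) from by
            show (if 0 = 0 then Real.sqrt (P 0 + P m0) else _) = _
            rw [if_pos rfl],
          Real.sq_sqrt (add_nonneg (Complex.normSq_nonneg _) (Complex.normSq_nonneg _))]
      have em : f m0 ^ 2 = 0 := by
        rw [show f m0 = 0 from by
            show (if m0 = 0 then _ else if m0 = m0 then (0:ℝ) else _) = _
            rw [if_neg (by omega), if_pos rfl]]
        ring
      have es : ∑ k ∈ s, f k ^ 2 = ∑ k ∈ s, P k := by
        refine Finset.sum_congr rfl fun k hk => ?_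
        obtain ⟨hk0, hkm, _⟩ := hmem k hk
        rw [show f k = Real.sqrt (P k) from by
            show (if k = 0 then _ else if k = m0 then _ else Real.sqrt (P k)) = _
            rw [if_neg hk0, if_neg hkm],
          Real.sq_sqrt (hPnn k)]
      rw [e0, em, es]
      ring
    have hg2 : ∑ k ∈ Finset.range n, g k ^ 2 = SB := by
      rw [hsplit (fun k => g k ^ 2), hSB, hsplit Q]
      have e0 : g 0 ^ 2 = Q 0 + Q m0 := by
        rw [show g 0 = Real.sqrt (Q 0 + Q m0) from by
            show (if 0 = 0 then Real.sqrt (Q 0 + Q m0) else _) = _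
            rw [if_pos rfl],
          Real.sq_sqrt (add_nonneg (Complex.normSq_nonneg _) (Complex.normSq_nonneg _))]
      have em : g m0 ^ 2 = 0 := by
        rw [show g m0 = 0 from by
            show (if m0 = 0 then _ else if m0 = m0 then (0:ℝ) else _) = _
            rw [if_neg (by omega), if_pos rfl]]
        ring
      have es : ∑ k ∈ s, g k ^ 2 = ∑ k ∈ s, Q k := by
        refine Finset.sum_congr rfl fun k hk => ?_
        obtain ⟨hk0, hkm, _⟩ := hmem k hk
        rw [show g k = Real.sqrt (Q k) from by
            show (if k = 0 then _ else if k = m0 then _ else Real.sqrt (Q k)) = _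
            rw [if_neg hk0, if_neg hkm],
          Real.sq_sqrt (hQnn k)]
      rw [e0, em, es]
      ring
    rwa [hf2, hg2] at h1
  have hsummed : ∑ k ∈ Finset.range n, ((1/2) * (P k + Q k) - f k * g k)
      ≤ ∑ k ∈ Finset.range n, T k := by
    rw [hsplit (fun k => (1/2) * (P k + Q k) - f k * g k), hsplit T]
    exact add_le_add hstar (Finset.sum_le_sum hgen)
  have hWsum : ∑ k ∈ Finset.range n, ((1/2) * (P k + Q k) - f k * g k)
      = (1/2) * (SA + SB) - ∑ k ∈ Finset.range n, f k * g k := by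
    rw [Finset.sum_sub_distrib, ← Finset.mul_sum, Finset.sum_add_distrib, ← hSA, ← hSB]
  have core : (1/2) * (SA + SB) - Real.sqrt SA * Real.sqrt SB ≤ ∑ k ∈ Finset.range n, T k := by
    rw [hWsum] at hsummed
    linarith
  -- final assembly
  have hSaX : (∑ k : Fin n, γn k.val * Complex.normSq (Vhat n a k.val))
      = ∑ k ∈ Finset.range n, γn k * P k :=
    Fin.sum_univ_eq_sum_range (fun k => γn k * Complex.normSq (Vhat n a k)) n
  have hSbX : (∑ k : Fin n, γn k.val * Complex.normSq (Vhat n b k.val))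
      = ∑ k ∈ Finset.range n, γn k * Q k :=
    Fin.sum_univ_eq_sum_range (fun k => γn k * Complex.normSq (Vhat n b k)) n
  have hTsum : ∑ k ∈ Finset.range n, T k
      = (1/2) * (∑ k ∈ Finset.range n,
          (γ2n k * Complex.normSq (Vhat n a k + ζ (2 * n) ^ k * Vhat n b k)
            + γ2n (n + k) * Complex.normSq (Vhat n a k - ζ (2 * n) ^ k * Vhat n b k)))
        - (∑ k ∈ Finset.range n, γn k * P k + ∑ k ∈ Finset.range n, γn k * Q k) := by
    rw [hT, Finset.sum_sub_distrib, ← Finset.mul_sum]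
    congr 1
    rw [← Finset.sum_add_distrib]
    refine Finset.sum_congr rfl fun k _ => by ring
  rw [hS2, hSaX, hSbX]
  have hnne : (n : ℝ) ≠ 0 := Nat.cast_ne_zero.mpr hn0
  have hfinal : ∑ k ∈ Finset.range n, γn k * P k + ∑ k ∈ Finset.range n, γn k * Q k
      + (n : ℝ)/2 * (Real.sqrt za - Real.sqrt zb) ^ 2
      ≤ (1/2) * (∑ k ∈ Finset.range n,
          (γ2n k * Complex.normSq (Vhat n a k + ζ (2 * n) ^ k * Vhat n b k)
            + γ2n (n + k) * Complex.normSq (Vhat n a k - ζ (2 * n) ^ k * Vhat n b k))) := by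
    rw [hTsum] at core
    linarith [hD, core]
  have hL : ∑ k ∈ Finset.range n, γn k * P k / (n:ℝ)^2
      = (∑ k ∈ Finset.range n, γn k * P k) / (n:ℝ)^2 := by rw [Finset.sum_div]
  have hcast2 : ((2 * n : ℕ) : ℝ) = 2 * (n : ℝ) := by push_cast; ring
  have hLeq : (∑ k ∈ Finset.range n, γn k * P k) / (n:ℝ)^2
        + (∑ k ∈ Finset.range n, γn k * Q k) / (n:ℝ)^2
        + 1 / (2 * (n:ℝ)) * (Real.sqrt za - Real.sqrt zb) ^ 2
      = (∑ k ∈ Finset.range n, γn k * P k + ∑ k ∈ Finset.range n, γn k * Q k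
          + (n : ℝ)/2 * (Real.sqrt za - Real.sqrt zb) ^ 2) * ((n:ℝ)^2)⁻¹ := by
    field_simp
  have hReq : (2:ℝ) * ((∑ k ∈ Finset.range n,
          (γ2n k * Complex.normSq (Vhat n a k + ζ (2 * n) ^ k * Vhat n b k)
            + γ2n (n + k) * Complex.normSq (Vhat n a k - ζ (2 * n) ^ k * Vhat n b k)))
          / ((2 * (n:ℝ)))^2)
      = ((1/2) * (∑ k ∈ Finset.range n,
          (γ2n k * Complex.normSq (Vhat n a k + ζ (2 * n) ^ k * Vhat n b k)
            + γ2n (n + k) * Complex.normSq (Vhat n a k - ζ (2 * n) ^ k * Vhat n b k))))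
        * ((n:ℝ)^2)⁻¹ := by
    field_simp
  rw [hcast2, hLeq, hReq]
  exact mul_le_mul_of_nonneg_right hfinal (by positivity)
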